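/- Let COM be a commitment scheme with message space M such that for each key k_1 and message m, Commit_COM(k_1, m) is a PMF over pairs (c, d), and let C_{k_1}(m) denote the marginal distribution of the commitment component c. Assume COM is ε-statistically-hiding: for every key k_1 and all messages m_1, m_2, Δ(C_{k_1}(m_1), C_{k_1}(m_2)) ≤ ε, where Δ(A,B) := Σ_x |Pr_A(x) − Pr_B(x)|. Let VC be a vector commitment scheme with maximum vector length L whose Commit and Open algorithms are deterministic functions. Consider the composed scheme of Construction 2 with key k = (k_1, k_2): sample (c_i, d_i) ← Commit_COM(k_1, m_i) independently for each i ∈ {1,…,n}, compute (c, D') = Commit_VC(k_2, [c_1,…,c_n]), and for each i let the opening be (c_i, d_i, Open_VC(k_2, D', i)). For n ≤ L, I ⊆ {1,…,n}, a message vector M ∈ M^n and key k, let CD_k(M, I) denote the joint distribution of the commitment c together with the openings at all positions i ∈ I. Then for all n ≤ L, all I ⊆ {1,…,n}, all message vectors M_1, M_2 ∈ M^n with (M_1)_I = (M_2)_I, and every key k: Δ(CD_k(M_1, I), CD_k(M_2, I)) ≤ L·ε. -/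

import Mathlib

/-!
Theorem 4 of the paper: the composed vector commitment scheme of
Construction 2 is `L·ε`-statistically-hiding under selective opening whenever
the underlying per-message commitment scheme `COM` is `ε`-statistically-hiding.

Statistical distance of two distributions `A, B` on the same type is
`Δ(A, B) := Σ_x |Pr_A(x) − Pr_B(x)|`.

In Construction 2 (with key `k = (k₁, k₂)`), `(cᵢ, dᵢ) ← Commit_COM(k₁, mᵢ)`
are sampled independently for `i ∈ {1, …, n}`, the vector commitment
`(c, D') = Commit_VC(k₂, [c₁, …, cₙ])` and the openings
`(cᵢ, dᵢ, Open_VC(k₂, D', i))` are computed deterministically.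
`CD_k(M, I)` is the joint distribution of `c` together with the openings at
all positions `i ∈ I`; it is modeled as a pair of `c` and the function sending
`i ∈ I` to the opening at position `i` (and everything else to `none`).
Message vectors are 1-indexed: the `i`-th entry of `M` is
`M.getD (i - 1) default`.
-/

/-- Statistical distance `Δ(p, q) = Σ_x |p(x) − q(x)|`. -/
noncomputable def statDist {α : Type} (p q : PMF α) : ℝ :=
  ∑' x, |(p x).toReal - (q x).toReal|

/-- Independent product of a list of distributions. -/
noncomputable def pmfList {α : Type} : List (PMF α) → PMF (List α)
  | [] => PMF.pure []
  | p :: ps => p.bind fun x => (pmfList ps).map fun xs => x :: xs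

open scoped ENNReal Classical

noncomputable def eDist {α : Type} (p q : PMF α) : ℝ≥0∞ :=
  ∑' x, ((p x - q x) + (q x - p x))

lemma eDist_ne_top {α : Type} (p q : PMF α) : eDist p q ≠ ⊤ := by
  have h : eDist p q ≤ 2 := by
    calc eDist p q ≤ ∑' x, (p x + q x) :=
          ENNReal.tsum_le_tsum fun x => add_le_add tsub_le_self tsub_le_self
      _ = 2 := by rw [ENNReal.tsum_add, p.tsum_coe, q.tsum_coe]; norm_num
  exact (h.trans_lt (by norm_num)).ne

lemma eDist_self {α : Type} (p : PMF α) : eDist p p = 0 := by simp [eDist]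

lemma statDist_eq {α : Type} (p q : PMF α) : statDist p q = (eDist p q).toReal := by
  rw [eDist, ENNReal.tsum_toReal_eq]
  · refine tsum_congr fun x => ?_
    have hp := p.apply_ne_top x
    have hq := q.apply_ne_top x
    rcases le_total (p x) (q x) with h | h
    · rw [tsub_eq_zero_of_le h, zero_add, ENNReal.toReal_sub_of_le h hq,
        abs_of_nonpos (sub_nonpos.2 (ENNReal.toReal_mono hq h))]
      ring
    · rw [tsub_eq_zero_of_le h, add_zero, ENNReal.toReal_sub_of_le h hp,
        abs_of_nonneg (sub_nonneg.2 (ENNReal.toReal_mono hp h))]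
  · intro x
    exact ENNReal.add_ne_top.2 ⟨(tsub_le_self.trans_lt (p.apply_lt_top x)).ne,
      (tsub_le_self.trans_lt (q.apply_lt_top x)).ne⟩

lemma statDist_nonneg {α : Type} (p q : PMF α) : 0 ≤ statDist p q :=
  tsum_nonneg fun _ => abs_nonneg _

lemma eDist_triangle {α : Type} (p q r : PMF α) : eDist p r ≤ eDist p q + eDist q r := by
  rw [eDist, eDist, eDist, ← ENNReal.tsum_add]
  refine ENNReal.tsum_le_tsum fun x => ?_
  have h1 : p x - r x ≤ (p x - q x) + (q x - r x) := by
    rw [tsub_le_iff_right]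
    calc p x ≤ (p x - q x) + q x := le_tsub_add
      _ ≤ (p x - q x) + ((q x - r x) + r x) := by
          exact add_le_add le_rfl le_tsub_add
      _ = (p x - q x) + (q x - r x) + r x := by ring
  have h2 : r x - p x ≤ (r x - q x) + (q x - p x) := by
    rw [tsub_le_iff_right]
    calc r x ≤ (r x - q x) + q x := le_tsub_add
      _ ≤ (r x - q x) + ((q x - p x) + p x) := by
          exact add_le_add le_rfl le_tsub_add
      _ = (r x - q x) + (q x - p x) + p x := by ring
  calc (p x - r x) + (r x - p x)
      ≤ ((p x - q x) + (q x - r x)) + ((r x - q x) + (q x - p x)) := add_le_add h1 h2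
    _ = ((p x - q x) + (q x - p x)) + ((q x - r x) + (r x - q x)) := by ring

lemma eDist_map_le {α β : Type} (f : α → β) (p q : PMF α) :
    eDist (p.map f) (q.map f) ≤ eDist p q := by
  have key : ∀ (p q : PMF α) (y : β),
      (p.map f) y - (q.map f) y ≤ ∑' x, if y = f x then p x - q x else 0 := by
    intro p q y
    rw [tsub_le_iff_right, PMF.map_apply, PMF.map_apply, ← ENNReal.tsum_add]
    refine ENNReal.tsum_le_tsum fun x => ?_
    split_ifs
    · exact le_tsub_add
    · simp
  calc eDist (p.map f) (q.map f)
      ≤ ∑' y, ((∑' x, if y = f x then p x - q x else 0)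
            + (∑' x, if y = f x then q x - p x else 0)) :=
        ENNReal.tsum_le_tsum fun y => add_le_add (key p q y) (key q p y)
    _ = ∑' y, ∑' x, if y = f x then (p x - q x) + (q x - p x) else 0 := by
        refine tsum_congr fun y => ?_
        rw [← ENNReal.tsum_add]
        refine tsum_congr fun x => ?_
        split_ifs <;> simp
    _ = ∑' x, ∑' y, if y = f x then (p x - q x) + (q x - p x) else 0 := ENNReal.tsum_comm
    _ = eDist p q := tsum_congr fun x => tsum_ite_eq (f x) _

lemma eDist_bind_left_le {α β : Type} (p q : PMF α) (h : α → PMF β) :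
    eDist (p.bind h) (q.bind h) ≤ eDist p q := by
  have key : ∀ (p q : PMF α) (y : β),
      (p.bind h) y - (q.bind h) y ≤ ∑' x, (p x - q x) * h x y := by
    intro p q y
    rw [tsub_le_iff_right, PMF.bind_apply, PMF.bind_apply, ← ENNReal.tsum_add]
    refine ENNReal.tsum_le_tsum fun x => ?_
    rw [← add_mul]
    exact mul_le_mul' (le_tsub_add) le_rfl
  calc eDist (p.bind h) (q.bind h)
      ≤ ∑' y, ((∑' x, (p x - q x) * h x y) + (∑' x, (q x - p x) * h x y)) :=
        ENNReal.tsum_le_tsum fun y => add_le_add (key p q y) (key q p y)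
    _ = ∑' y, ∑' x, ((p x - q x) + (q x - p x)) * h x y := by
        refine tsum_congr fun y => ?_
        rw [← ENNReal.tsum_add]
        exact tsum_congr fun x => (add_mul _ _ _).symm
    _ = ∑' x, ∑' y, ((p x - q x) + (q x - p x)) * h x y := ENNReal.tsum_comm
    _ = ∑' x, ((p x - q x) + (q x - p x)) := by
        refine tsum_congr fun x => ?_
        rw [ENNReal.tsum_mul_left, (h x).tsum_coe, mul_one]
    _ = eDist p q := rfl

lemma eDist_bind_right_le {α β : Type} (p : PMF α) (f g : α → PMF β) (c : ℝ≥0∞)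
    (hfg : ∀ x, eDist (f x) (g x) ≤ c) : eDist (p.bind f) (p.bind g) ≤ c := by
  have key : ∀ (f g : α → PMF β) (y : β),
      (p.bind f) y - (p.bind g) y ≤ ∑' x, p x * (f x y - g x y) := by
    intro f g y
    rw [tsub_le_iff_right, PMF.bind_apply, PMF.bind_apply, ← ENNReal.tsum_add]
    refine ENNReal.tsum_le_tsum fun x => ?_
    rw [← mul_add]
    exact mul_le_mul' le_rfl (le_tsub_add)
  calc eDist (p.bind f) (p.bind g)
      ≤ ∑' y, ((∑' x, p x * (f x y - g x y)) + (∑' x, p x * (g x y - f x y))) :=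
        ENNReal.tsum_le_tsum fun y => add_le_add (key f g y) (key g f y)
    _ = ∑' y, ∑' x, p x * ((f x y - g x y) + (g x y - f x y)) := by
        refine tsum_congr fun y => ?_
        rw [← ENNReal.tsum_add]
        exact tsum_congr fun x => (mul_add _ _ _).symm
    _ = ∑' x, ∑' y, p x * ((f x y - g x y) + (g x y - f x y)) := ENNReal.tsum_comm
    _ = ∑' x, p x * eDist (f x) (g x) := tsum_congr fun x => ENNReal.tsum_mul_left
    _ ≤ ∑' x, p x * c := ENNReal.tsum_le_tsum fun x => mul_le_mul' le_rfl (hfg x)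
    _ = c := by rw [ENNReal.tsum_mul_right, p.tsum_coe, one_mul]

lemma pmfList_nil {α : Type} : pmfList ([] : List (PMF α)) = PMF.pure [] := rfl

lemma pmfList_cons {α : Type} (p : PMF α) (ps : List (PMF α)) :
    pmfList (p :: ps) = p.bind fun x => (pmfList ps).map fun xs => x :: xs := rfl

lemma eDist_pmfList_le {α : Type} (c : ℝ≥0∞) {as bs : List (PMF α)}
    (h : List.Forall₂ (fun p q => eDist p q ≤ c) as bs) :
    eDist (pmfList as) (pmfList bs) ≤ as.length * c := by
  induction h with
  | nil => simp [pmfList_nil, eDist_self]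
  | @cons p q as bs hpq htail ih =>
    calc eDist (pmfList (p :: as)) (pmfList (q :: bs))
        ≤ eDist (pmfList (p :: as)) (pmfList (q :: as))
          + eDist (pmfList (q :: as)) (pmfList (q :: bs)) := eDist_triangle _ _ _
      _ ≤ eDist p q + eDist (pmfList as) (pmfList bs) := by
          refine add_le_add ?_ ?_
          · rw [pmfList_cons, pmfList_cons]
            exact eDist_bind_left_le p q _
          · rw [pmfList_cons, pmfList_cons]
            exact eDist_bind_right_le q _ _ _ fun x => eDist_map_le _ _ _
      _ ≤ c + as.length * c := add_le_add hpq ih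
      _ = (p :: as).length * c := by
          rw [List.length_cons]
          push_cast
          ring
/-- The selective-opening view `CD_k(M, I)` of the composed scheme: the joint
distribution of the vector commitment `c` together with the openings
`(cᵢ, dᵢ, Open_VC(k₂, D', i))` at all positions `i ∈ I`. -/
noncomputable def selectiveOpeningView
    {Msg C D CC DD O : Type} [Inhabited C] [Inhabited D]
    (comCommit : Msg → PMF (C × D))
    (vcCommit : List C → CC × DD) (vcOpen : DD → ℕ → O)
    (M : List Msg) (I : Finset ℕ) :
    PMF (CC × (ℕ → Option ((C × D) × O))) :=
  (pmfList (M.map comCommit)).map fun cds =>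
    ((vcCommit (cds.map Prod.fst)).1,
      fun i =>
        if i ∈ I then
          some (cds.getD (i - 1) default, vcOpen (vcCommit (cds.map Prod.fst)).2 i)
        else none)

def maskPair {C D : Type} (I : Finset ℕ) (i : ℕ) (cd : C × D) : C × Option D :=
  (cd.1, if i ∈ I then some cd.2 else none)

def maskL {C D : Type} (I : Finset ℕ) : ℕ → List (C × D) → List (C × Option D)
  | _, [] => []
  | i, cd :: t => maskPair I i cd :: maskL I (i + 1) t

noncomputable def maskP {Msg C D : Type} (com : Msg → PMF (C × D)) (I : Finset ℕ) :
    ℕ → List Msg → List (PMF (C × Option D))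
  | _, [] => []
  | i, m :: t => (com m).map (maskPair I i) :: maskP com I (i + 1) t

def unmask {C D : Type} [Inhabited D] (x : C × Option D) : C × D :=
  (x.1, x.2.getD default)

lemma maskL_map_fst {C D : Type} (I : Finset ℕ) :
    ∀ (l : List (C × D)) (s : ℕ), (maskL I s l).map Prod.fst = l.map Prod.fst := by
  intro l
  induction l with
  | nil => intro s; rfl
  | cons cd t ih => intro s; simp [maskL, maskPair, ih (s + 1)]

lemma maskL_length {C D : Type} (I : Finset ℕ) :
    ∀ (l : List (C × D)) (s : ℕ), (maskL I s l).length = l.length := by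
  intro l
  induction l with
  | nil => intro s; rfl
  | cons cd t ih => intro s; simp [maskL, ih (s + 1)]

lemma maskL_getD {C D : Type} [Inhabited C] [Inhabited D] (I : Finset ℕ) :
    ∀ (l : List (C × D)) (s j : ℕ), j < l.length →
      (maskL I s l).getD j default = maskPair I (s + j) (l.getD j default) := by
  intro l
  induction l with
  | nil => intro s j h; simp at h
  | cons cd t ih =>
    intro s j h
    cases j with
    | zero => simp [maskL]
    | succ j =>
      simp only [maskL, List.getD_cons_succ]
      rw [ih (s + 1) j (by simpa using h)]
      congr 1
      omega

lemma maskP_length {Msg C D : Type} (com : Msg → PMF (C × D)) (I : Finset ℕ) :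
    ∀ (M : List Msg) (s : ℕ), (maskP com I s M).length = M.length := by
  intro M
  induction M with
  | nil => intro s; rfl
  | cons m t ih => intro s; simp [maskP, ih (s + 1)]

lemma pmfList_maskP {Msg C D : Type} (com : Msg → PMF (C × D)) (I : Finset ℕ) :
    ∀ (M : List Msg) (s : ℕ),
      pmfList (maskP com I s M) = (pmfList (M.map com)).map (maskL I s) := by
  intro M
  induction M with
  | nil =>
    intro s
    simp only [maskP, List.map_nil, pmfList_nil, PMF.pure_map]
    rfl
  | cons m t ih =>
    intro s
    simp only [maskP, List.map_cons, pmfList_cons]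
    rw [PMF.map_bind, PMF.bind_map]
    refine congr_arg _ (funext fun cd => ?_)
    simp only [Function.comp_apply]
    have hfun : ((fun xs => maskPair I s cd :: xs) ∘ maskL I (s + 1))
        = (maskL I s ∘ fun xs : List (C × D) => cd :: xs) := by
      funext xs
      simp [Function.comp, maskL]
    rw [ih (s + 1), PMF.map_comp, PMF.map_comp, hfun]

noncomputable def maskedView {C D CC DD O : Type} [Inhabited C] [Inhabited D]
    (vcCommit : List C → CC × DD) (vcOpen : DD → ℕ → O) (I : Finset ℕ)
    (ys : List (C × Option D)) : CC × (ℕ → Option ((C × D) × O)) :=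
  ((vcCommit (ys.map Prod.fst)).1,
    fun i =>
      if i ∈ I then
        some (unmask (ys.getD (i - 1) default), vcOpen (vcCommit (ys.map Prod.fst)).2 i)
      else none)

lemma view_factor {Msg C D CC DD O : Type} [Inhabited C] [Inhabited D]
    (com : Msg → PMF (C × D)) (vcCommit : List C → CC × DD) (vcOpen : DD → ℕ → O)
    (M : List Msg) (I : Finset ℕ) (hI1 : ∀ i ∈ I, 1 ≤ i) :
    selectiveOpeningView com vcCommit vcOpen M I
      = (pmfList (maskP com I 1 M)).map (maskedView vcCommit vcOpen I) := by
  rw [pmfList_maskP, PMF.map_comp]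
  unfold selectiveOpeningView
  congr 1
  funext cds
  simp only [Function.comp_apply, maskedView, maskL_map_fst]
  refine (Prod.mk.injEq _ _ _ _).mpr ⟨rfl, funext fun i => ?_⟩
  by_cases hi : i ∈ I
  · simp only [hi, if_true]
    congr 2
    by_cases hj : i - 1 < cds.length
    · rw [maskL_getD I cds 1 (i - 1) hj]
      have h1 : 1 + (i - 1) = i := by have := hI1 i hi; omega
      rw [h1]
      simp [unmask, maskPair, hi]
    · have e1 : cds.getD (i - 1) default = default :=
        List.getD_eq_default _ _ (by omega)
      have e2 : (maskL I 1 cds).getD (i - 1) default = default :=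
        List.getD_eq_default _ _ (by rw [maskL_length]; omega)
      rw [e1, e2]
      rfl
  · simp [hi]

lemma forall2_maskP {Msg C D : Type} [Inhabited Msg] [Inhabited C] [Inhabited D]
    (com : Msg → PMF (C × D)) (I : Finset ℕ) (c : ℝ≥0∞)
    (hc : ∀ m₁ m₂ : Msg, eDist ((com m₁).map Prod.fst) ((com m₂).map Prod.fst) ≤ c) :
    ∀ (M₁ M₂ : List Msg) (s : ℕ), M₁.length = M₂.length →
      (∀ i ∈ I, s ≤ i → M₁.getD (i - s) default = M₂.getD (i - s) default) →
      List.Forall₂ (fun p q => eDist p q ≤ c) (maskP com I s M₁) (maskP com I s M₂) := by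
  intro M₁
  induction M₁ with
  | nil =>
    intro M₂ s hlen _
    cases M₂ with
    | nil => exact List.Forall₂.nil
    | cons _ _ => simp at hlen
  | cons m₁ t₁ ih =>
    intro M₂ s hlen hmi
    cases M₂ with
    | nil => simp at hlen
    | cons m₂ t₂ =>
      refine List.Forall₂.cons ?_ ?_
      · by_cases hs : s ∈ I
        · have hm : m₁ = m₂ := by
            have := hmi s hs le_rfl
            simpa using this
          rw [hm]
          exact (eDist_self _).le.trans (by simp)
        · have hmask : maskPair I s = (fun x : C => ((x, none) : C × Option D)) ∘ Prod.fst := by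
            funext cd
            simp [maskPair, hs]
          rw [hmask, ← PMF.map_comp, ← PMF.map_comp]
          exact (eDist_map_le _ _ _).trans (hc m₁ m₂)
      · refine ih t₂ (s + 1) (by simpa using hlen) ?_
        intro i hi hsi
        have h := hmi i hi (by omega)
        have h1 : i - s = (i - (s + 1)) + 1 := by omega
        rw [h1] at h
        simpa using h
/-- **Theorem 4: statistical hiding under selective opening.**
If `COM` is `ε`-statistically-hiding (for every key `k₁` and all messages
`m₁, m₂`, the commitment components satisfy `Δ(C_{k₁}(m₁), C_{k₁}(m₂)) ≤ ε`),
then for all `n ≤ L`, all `I ⊆ {1, …, n}`, all message vectors `M₁, M₂` of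
length `n` with `(M₁)_I = (M₂)_I`, and every key `k = (k₁, k₂)`:
`Δ(CD_k(M₁, I), CD_k(M₂, I)) ≤ L·ε`. -/
theorem composed_scheme_statistically_hiding_under_selective_opening
    {K₁ K₂ Msg C D CC DD O : Type} [Inhabited Msg] [Inhabited C] [Inhabited D]
    (comCommit : K₁ → Msg → PMF (C × D)) (ε : ℝ)
    -- `COM` is `ε`-statistically-hiding:
    (hCOM : ∀ (k₁ : K₁) (m₁ m₂ : Msg),
      statDist ((comCommit k₁ m₁).map Prod.fst) ((comCommit k₁ m₂).map Prod.fst) ≤ ε)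
    (L : ℕ) (vcCommit : K₂ → List C → CC × DD) (vcOpen : K₂ → DD → ℕ → O)
    (n : ℕ) (hn : n ≤ L) (I : Finset ℕ) (hI : I ⊆ Finset.Icc 1 n)
    (M₁ M₂ : List Msg) (hM₁ : M₁.length = n) (hM₂ : M₂.length = n)
    (hMI : ∀ i ∈ I, M₁.getD (i - 1) default = M₂.getD (i - 1) default)
    (k₁ : K₁) (k₂ : K₂) :
    statDist
      (selectiveOpeningView (comCommit k₁) (vcCommit k₂) (vcOpen k₂) M₁ I)
      (selectiveOpeningView (comCommit k₁) (vcCommit k₂) (vcOpen k₂) M₂ I)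
    ≤ (L : ℝ) * ε := by
  have hε0 : 0 ≤ ε := le_trans (statDist_nonneg _ _) (hCOM k₁ default default)
  have hc : ∀ m₁ m₂ : Msg,
      eDist ((comCommit k₁ m₁).map Prod.fst) ((comCommit k₁ m₂).map Prod.fst)
        ≤ ENNReal.ofReal ε := by
    intro m₁ m₂
    have h1 := hCOM k₁ m₁ m₂
    rw [statDist_eq] at h1
    calc eDist ((comCommit k₁ m₁).map Prod.fst) ((comCommit k₁ m₂).map Prod.fst)
        = ENNReal.ofReal (eDist ((comCommit k₁ m₁).map Prod.fst)
            ((comCommit k₁ m₂).map Prod.fst)).toReal :=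
          (ENNReal.ofReal_toReal (eDist_ne_top _ _)).symm
      _ ≤ ENNReal.ofReal ε := ENNReal.ofReal_le_ofReal h1
  have hI1 : ∀ i ∈ I, 1 ≤ i := fun i hi => (Finset.mem_Icc.1 (hI hi)).1
  have hF2 := forall2_maskP (comCommit k₁) I (ENNReal.ofReal ε) hc M₁ M₂ 1
    (hM₁.trans hM₂.symm) (fun i hi _ => hMI i hi)
  have hkey : eDist
      (selectiveOpeningView (comCommit k₁) (vcCommit k₂) (vcOpen k₂) M₁ I)
      (selectiveOpeningView (comCommit k₁) (vcCommit k₂) (vcOpen k₂) M₂ I)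
      ≤ (n : ℝ≥0∞) * ENNReal.ofReal ε := by
    rw [view_factor (comCommit k₁) (vcCommit k₂) (vcOpen k₂) M₁ I hI1,
      view_factor (comCommit k₁) (vcCommit k₂) (vcOpen k₂) M₂ I hI1]
    refine le_trans (eDist_map_le _ _ _) ?_
    have h := eDist_pmfList_le (ENNReal.ofReal ε) hF2
    rwa [maskP_length, hM₁] at h
  rw [statDist_eq]
  have hfin : (n : ℝ≥0∞) * ENNReal.ofReal ε ≠ ⊤ :=
    ENNReal.mul_ne_top (ENNReal.natCast_ne_top n) ENNReal.ofReal_ne_top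
  have h3 := ENNReal.toReal_mono hfin hkey
  rw [ENNReal.toReal_mul, ENNReal.toReal_natCast, ENNReal.toReal_ofReal hε0] at h3
  exact h3.trans (mul_le_mul_of_nonneg_right (Nat.cast_le.2 hn) hε0)
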